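/- Let n ≥ 2, η > 0, and let x_1, …, x_n ∈ ℝ^d and g_1, …, g_n ∈ ℝ^d. Set μ = (1/n)∑_{i=1}^n x_i, Γ = (1/n)∑_{i=1}^n ‖x_i − μ‖², and M = (1/n)∑_{i=1}^n ‖g_i‖². For each ordered pair (i, j) with i ≠ j, define the updated configuration x'(i,j) by x'_i = x'_j = (x_i + x_j)/2 − η(g_i + g_j)/2 and x'_k = x_k for k ∉ {i, j}; let μ'(i,j) be its mean and Γ'(i,j) = (1/n)∑_{k=1}^n ‖x'_k − μ'(i,j)‖². Then the average over all ordered pairs satisfies (1/(n(n−1))) ∑_{i ≠ j} Γ'(i,j) ≤ (1 − 1/(2n)) Γ + (4/n) η² M. -/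

import Mathlib

open Finset

open scoped RealInnerProductSpace

section helpers
variable {E : Type*} [NormedAddCommGroup E] [InnerProductSpace ℝ E]

lemma sum_ite_pair {M : Type*} [AddCommGroup M] {n : ℕ} {i j : Fin n} (hij : i ≠ j)
    (c : M) (h : Fin n → M) :
    ∑ k, (if k = i ∨ k = j then c else h k) = c + c + (∑ k, h k - (h i + h j)) := by
  classical
  rw [Finset.sum_ite]
  have h1 : (univ.filter fun k => k = i ∨ k = j) = ({i, j} : Finset (Fin n)) := by
    ext k; simp
  have h2 : (univ.filter fun k => ¬(k = i ∨ k = j)) = univ \ ({i, j} : Finset (Fin n)) := by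
    ext k; simp
  rw [h1, h2, Finset.sum_const, Finset.card_pair hij,
    Finset.sum_sdiff_eq_sub (Finset.subset_univ _), Finset.sum_pair hij, two_smul]

lemma norm_add_smul_sq (v s : E) (c : ℝ) :
    ‖v + c • s‖ ^ 2 = ‖v‖ ^ 2 + 2 * c * ⟪v, s⟫ + c ^ 2 * ‖s‖ ^ 2 := by
  rw [norm_add_sq_real, real_inner_smul_right, norm_smul]
  simp [mul_pow, sq_abs]
  ring

lemma norm_half_smul_sq (v : E) : ‖(2:ℝ)⁻¹ • v‖ ^ 2 = (1/4) * ‖v‖ ^ 2 := by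
  rw [norm_smul, Real.norm_eq_abs, abs_of_pos (by norm_num : (0:ℝ) < 2⁻¹), mul_pow]
  ring

lemma young_bound (η : ℝ) (hη : 0 < η) (a b : E) :
    -(2*η*⟪a, b⟫) ≤ (1/2)*‖a‖^2 + 2*η^2*‖b‖^2 := by
  have h1 := abs_real_inner_le_norm a b
  have h2 := neg_abs_le (⟪a, b⟫ : ℝ)
  nlinarith [sq_nonneg (‖a‖ - 2*η*‖b‖), norm_nonneg a, norm_nonneg b, hη.le]

lemma sum_offDiag_eq {n : ℕ} (F : Fin n → Fin n → ℝ) :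
    ∑ p ∈ (univ : Finset (Fin n)).offDiag, F p.1 p.2
      = (∑ i, ∑ j, F i j) - ∑ i, F i i := by
  classical
  have h := Finset.sum_union (f := fun p : Fin n × Fin n => F p.1 p.2)
    (Finset.disjoint_diag_offDiag (univ : Finset (Fin n)))
  rw [Finset.diag_union_offDiag, Finset.sum_diag] at h
  rw [Finset.sum_product] at h
  linarith

lemma offDiag_inner {n : ℕ} (f h : Fin n → E) :
    ∑ p ∈ (univ : Finset (Fin n)).offDiag, ⟪f p.1, h p.2⟫
      = ⟪∑ i, f i, ∑ i, h i⟫ - ∑ i, ⟪f i, h i⟫ := by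
  rw [sum_offDiag_eq fun i j => ⟪f i, h j⟫, sum_inner]
  congr 1
  exact Finset.sum_congr rfl fun i _ => (inner_sum _ _ _).symm

lemma offDiag_fst {n : ℕ} (f : Fin n → ℝ) :
    ∑ p ∈ (univ : Finset (Fin n)).offDiag, f p.1 = ((n : ℝ) - 1) * ∑ i, f i := by
  rw [sum_offDiag_eq (fun i _ => f i)]
  simp only [Finset.sum_const, card_univ, Fintype.card_fin, nsmul_eq_mul, ← Finset.mul_sum]
  ring

lemma offDiag_snd {n : ℕ} (f : Fin n → ℝ) :
    ∑ p ∈ (univ : Finset (Fin n)).offDiag, f p.2 = ((n : ℝ) - 1) * ∑ i, f i := by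
  rw [sum_offDiag_eq (fun _ j => f j), Finset.sum_comm]
  simp only [Finset.sum_const, card_univ, Fintype.card_fin, nsmul_eq_mul, ← Finset.mul_sum]
  ring

end helpers

set_option maxHeartbeats 2000000 in
/-- Deterministic core of the potential-decrease step of the HDO
algorithm: averaging the post-step potential `Γ'(i,j)` over all ordered pairs of distinct
interacting nodes gives
`(1/(n(n−1))) ∑_{i≠j} Γ'(i,j) ≤ (1 − 1/(2n)) Γ + (4/n) η² M`. -/
theorem hdo_potential_step (d n : ℕ) (hn : 2 ≤ n) (η : ℝ) (hη : 0 < η)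
    (x g : Fin n → EuclideanSpace ℝ (Fin d)) :
    let μ : EuclideanSpace ℝ (Fin d) := (n : ℝ)⁻¹ • ∑ i, x i
    let Γ : ℝ := (n : ℝ)⁻¹ * ∑ i, ‖x i - μ‖ ^ 2
    let M : ℝ := (n : ℝ)⁻¹ * ∑ i, ‖g i‖ ^ 2
    let x' : Fin n → Fin n → Fin n → EuclideanSpace ℝ (Fin d) := fun i j k =>
      if k = i ∨ k = j then (2 : ℝ)⁻¹ • (x i + x j) - (η / 2) • (g i + g j) else x k
    let μ' : Fin n → Fin n → EuclideanSpace ℝ (Fin d) := fun i j =>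
      (n : ℝ)⁻¹ • ∑ k, x' i j k
    let Γ' : Fin n → Fin n → ℝ := fun i j => (n : ℝ)⁻¹ * ∑ k, ‖x' i j k - μ' i j‖ ^ 2
    ((n : ℝ) * ((n : ℝ) - 1))⁻¹ * ∑ p ∈ (univ : Finset (Fin n)).offDiag, Γ' p.1 p.2
      ≤ (1 - 1 / (2 * (n : ℝ))) * Γ + 4 / (n : ℝ) * η ^ 2 * M := by
  classical
  intro μ Γ M x' μ' Γ'
  have hN2 : (2:ℝ) ≤ (n:ℝ) := by exact_mod_cast hn
  have hN0 : (0:ℝ) < (n:ℝ) := by linarith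
  have hNne : (n:ℝ) ≠ 0 := ne_of_gt hN0
  set N : ℝ := (n : ℝ) with hNdef
  set u : Fin n → EuclideanSpace ℝ (Fin d) := fun i => x i - μ with hu
  have hcard : (Finset.univ : Finset (Fin n)).card = n := by simp
  have hsumu : ∑ i, u i = 0 := by
    simp only [hu, Finset.sum_sub_distrib, Finset.sum_const, hcard]
    have hμval : (N : ℝ) • μ = ∑ i, x i := by
      show (N:ℝ) • ((N:ℝ)⁻¹ • ∑ i, x i) = _
      rw [smul_smul, mul_inv_cancel₀ hNne, one_smul]
    rw [← Nat.cast_smul_eq_nsmul ℝ, ← hNdef, hμval, sub_self]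
  set S : ℝ := ∑ i, ‖u i‖^2 with hS
  set G : ℝ := ∑ i, ‖g i‖^2 with hG
  set P : ℝ := ∑ i, ⟪u i, g i⟫ with hP
  set W : ℝ := ‖∑ i, g i‖^2 with hW
  have hSnn : 0 ≤ S := hS ▸ Finset.sum_nonneg fun i _ => sq_nonneg _
  have hGnn : 0 ≤ G := hG ▸ Finset.sum_nonneg fun i _ => sq_nonneg _
  have hΓeq : Γ = N⁻¹ * S := rfl
  have hMeq : M = N⁻¹ * G := rfl
  -- per-pair identity
  have key : ∀ i j : Fin n, i ≠ j → Γ' i j =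
      N⁻¹ * (S + ⟪u i, u j⟫ - (‖u i‖^2 + ‖u j‖^2)/2
        - η * (⟪u i, g i⟫ + ⟪u i, g j⟫ + ⟪u j, g i⟫ + ⟪u j, g j⟫)
        + η^2 * ((N-2)/(2*N)) * (‖g i‖^2 + ‖g j‖^2 + 2*⟪g i, g j⟫)) := by
    intro i j hij
    have h1 : ∑ k, x' i j k = (∑ k, x k) - η • (g i + g j) := by
      show ∑ k, (if k = i ∨ k = j then (2:ℝ)⁻¹ • (x i + x j) - (η/2) • (g i + g j) else x k) = _
      rw [sum_ite_pair hij]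
      module
    have h2 : μ' i j = μ - (η * N⁻¹) • (g i + g j) := by
      show N⁻¹ • ∑ k, x' i j k = _
      rw [h1]
      show N⁻¹ • ((∑ k, x k) - η • (g i + g j))
         = N⁻¹ • (∑ k, x k) - (η * N⁻¹) • (g i + g j)
      module
    have h3 : ∀ k, x' i j k - μ' i j =
        if k = i ∨ k = j then
          ((2:ℝ)⁻¹ • (u i + u j) + (η * N⁻¹ - η/2) • (g i + g j))
        else (u k + (η * N⁻¹) • (g i + g j)) := by
      intro k
      show (if k = i ∨ k = j then (2:ℝ)⁻¹ • (x i + x j) - (η/2) • (g i + g j) else x k)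
          - μ' i j = _
      rw [h2]
      by_cases hk : k = i ∨ k = j
      · rw [if_pos hk, if_pos hk]
        simp only [hu]
        module
      · rw [if_neg hk, if_neg hk]
        simp only [hu]
        module
    have hz : ∑ k, ⟪u k, g i + g j⟫ = 0 := by
      rw [← sum_inner, hsumu, inner_zero_left]
    have h6 : ∑ k, ‖u k + (η * N⁻¹) • (g i + g j)‖^2
        = S + N * ((η * N⁻¹)^2 * ‖g i + g j‖^2) := by
      simp only [norm_add_smul_sq]
      rw [Finset.sum_add_distrib, Finset.sum_add_distrib, ← Finset.mul_sum, hz,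
        Finset.sum_const, hcard, nsmul_eq_mul, mul_zero, ← hNdef, ← hS]
      ring
    have h5 : ∑ k, ‖x' i j k - μ' i j‖^2 =
        ‖(2:ℝ)⁻¹ • (u i + u j) + (η * N⁻¹ - η/2) • (g i + g j)‖^2 * 2
        + (∑ k, ‖u k + (η * N⁻¹) • (g i + g j)‖^2
           - (‖u i + (η * N⁻¹) • (g i + g j)‖^2 + ‖u j + (η * N⁻¹) • (g i + g j)‖^2)) := by
      calc ∑ k, ‖x' i j k - μ' i j‖^2
          = ∑ k, (if k = i ∨ k = j
              then ‖(2:ℝ)⁻¹ • (u i + u j) + (η * N⁻¹ - η/2) • (g i + g j)‖^2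
              else ‖u k + (η * N⁻¹) • (g i + g j)‖^2) := by
            refine Finset.sum_congr rfl fun k _ => ?_
            rw [h3 k]
            by_cases hk : k = i ∨ k = j
            · rw [if_pos hk, if_pos hk]
            · rw [if_neg hk, if_neg hk]
        _ = _ := by rw [sum_ite_pair hij]; ring
    have h4 : Γ' i j = N⁻¹ * ∑ k, ‖x' i j k - μ' i j‖^2 := rfl
    rw [h4, h5, h6,
      norm_add_smul_sq ((2:ℝ)⁻¹ • (u i + u j)) (g i + g j) (η * N⁻¹ - η/2),
      norm_add_smul_sq (u i) (g i + g j) (η * N⁻¹),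
      norm_add_smul_sq (u j) (g i + g j) (η * N⁻¹),
      norm_half_smul_sq, real_inner_smul_left]
    simp only [norm_add_sq_real, inner_add_left, inner_add_right]
    field_simp
    ring
  -- sum over the off-diagonal
  have hcard2 : (((univ : Finset (Fin n)).offDiag.card : ℝ)) = N^2 - N := by
    rw [Finset.offDiag_card, card_univ, Fintype.card_fin,
      Nat.cast_sub (Nat.le_mul_of_pos_left n (by omega)), Nat.cast_mul, ← hNdef]
    ring
  have o2 : ∑ p ∈ (univ : Finset (Fin n)).offDiag, ⟪u p.1, u p.2⟫ = -S := by
    rw [offDiag_inner, hsumu, inner_zero_left]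
    simp only [real_inner_self_eq_norm_sq, ← hS]
    ring
  have o5 : ∑ p ∈ (univ : Finset (Fin n)).offDiag, ⟪u p.1, g p.1⟫ = (N-1)*P := by
    rw [offDiag_fst (fun i => ⟪u i, g i⟫), ← hNdef, ← hP]
  have o6 : ∑ p ∈ (univ : Finset (Fin n)).offDiag, ⟪u p.2, g p.2⟫ = (N-1)*P := by
    rw [offDiag_snd (fun i => ⟪u i, g i⟫), ← hNdef, ← hP]
  have o7 : ∑ p ∈ (univ : Finset (Fin n)).offDiag, ⟪u p.1, g p.2⟫ = -P := by
    rw [offDiag_inner, hsumu, inner_zero_left, ← hP]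
    ring
  have o8 : ∑ p ∈ (univ : Finset (Fin n)).offDiag, ⟪u p.2, g p.1⟫ = -P := by
    rw [Finset.sum_congr rfl fun (p : Fin n × Fin n) _ => (real_inner_comm (u p.2) (g p.1)).symm,
      offDiag_inner, hsumu, inner_zero_right,
      Finset.sum_congr rfl fun (i : Fin n) _ => real_inner_comm (u i) (g i), ← hP]
    ring
  have o11 : ∑ p ∈ (univ : Finset (Fin n)).offDiag, ⟪g p.1, g p.2⟫ = W - G := by
    rw [offDiag_inner, real_inner_self_eq_norm_sq, ← hW]
    simp only [real_inner_self_eq_norm_sq, ← hG]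
  have hsum : ∑ p ∈ (univ : Finset (Fin n)).offDiag, Γ' p.1 p.2
      = N⁻¹ * (N*(N-2)*S - 2*η*(N-2)*P + ((N-2)/(2*N))*η^2*(2*(N-2)*G + 2*W)) := by
    rw [Finset.sum_congr rfl fun p hp => key p.1 p.2 (Finset.mem_offDiag.mp hp).2.2]
    rw [← Finset.mul_sum]
    congr 1
    simp only [Finset.sum_add_distrib, Finset.sum_sub_distrib, ← Finset.sum_div,
      ← Finset.mul_sum]
    rw [o2, o5, o6, o7, o8, o11, offDiag_fst (fun i => ‖u i‖^2),
      offDiag_snd (fun i => ‖u i‖^2), offDiag_fst (fun i => ‖g i‖^2),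
      offDiag_snd (fun i => ‖g i‖^2), Finset.sum_const, nsmul_eq_mul, hcard2,
      ← hNdef, ← hS, ← hG]
    field_simp
    ring
  -- final inequality
  rw [hsum, hΓeq, hMeq]
  have hP2 : -(2*η*P) ≤ S/2 + 2*η^2*G := by
    have habs : ∀ i : Fin n, -(2*η*⟪u i, g i⟫) ≤ (1/2)*‖u i‖^2 + 2*η^2*‖g i‖^2 :=
      fun i => young_bound η hη (u i) (g i)
    calc -(2*η*P) = ∑ i, -(2*η*⟪u i, g i⟫) := by
          rw [hP, Finset.mul_sum]
          exact (Finset.sum_neg_distrib _).symm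
      _ ≤ ∑ i, ((1/2)*‖u i‖^2 + 2*η^2*‖g i‖^2) :=
          Finset.sum_le_sum fun i _ => habs i
      _ = S/2 + 2*η^2*G := by
          rw [Finset.sum_add_distrib, ← Finset.mul_sum, ← Finset.mul_sum, ← hS, ← hG]
          ring
  have hWle : W ≤ N*G := by
    have h1 : ‖∑ i, g i‖ ≤ ∑ i, ‖g i‖ := norm_sum_le _ _
    have h2 : (∑ i, ‖g i‖)^2 ≤ (n : ℝ) * ∑ i, ‖g i‖^2 := by
      have := sq_sum_le_card_mul_sum_sq (s := (univ : Finset (Fin n))) (f := fun i => ‖g i‖)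
      simpa [hcard] using this
    have h3 : W ≤ (∑ i, ‖g i‖)^2 := by
      rw [hW]
      exact pow_le_pow_left₀ (norm_nonneg _) h1 2
    rw [hG, hNdef]
    exact le_trans h3 h2
  have hN1 : (1:ℝ) < N := by linarith
  have hpos : (0:ℝ) < 2*N^3*(N-1) :=
    mul_pos (mul_pos two_pos (pow_pos hN0 3)) (by linarith)
  have hNm1 : N - 1 ≠ 0 := by linarith
  clear_value S G P W N u
  clear hsumu hu hP hS hG hW hΓeq hMeq key hsum hcard hcard2 o2 o5 o6 o7 o8 o11
  clear Γ' μ' x' M Γ u μ x g hNdef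
  have h1 : (N*(N-1))⁻¹ * (N⁻¹ * (N*(N-2)*S - 2*η*(N-2)*P + ((N-2)/(2*N))*η^2*(2*(N-2)*G + 2*W)))
      = (2*N^2*(N-2)*S - 4*N*η*(N-2)*P + η^2*(N-2)*(2*(N-2)*G + 2*W)) / (2*N^3*(N-1)) := by
    field_simp
    ring
  have h2 : (1 - 1/(2*N))*(N⁻¹*S) + 4/N*η^2*(N⁻¹*G)
      = ((2*N-1)*N*(N-1)*S + 8*N*(N-1)*η^2*G) / (2*N^3*(N-1)) := by
    field_simp
    ring
  rw [h1, h2, div_le_div_iff_of_pos_right hpos]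
  have hQ1 : (0:ℝ) ≤ 2*N*(N-2) := by nlinarith
  have hQ2 : (0:ℝ) ≤ 2*η^2*(N-2) := by nlinarith [sq_nonneg η]
  have t1 : 2*N*(N-2)*(-(2*η*P)) ≤ 2*N*(N-2)*(S/2 + 2*η^2*G) :=
    mul_le_mul_of_nonneg_left hP2 hQ1
  have t2 : 2*η^2*(N-2)*W ≤ 2*η^2*(N-2)*(N*G) :=
    mul_le_mul_of_nonneg_left hWle hQ2
  have h3 : (0:ℝ) ≤ η^2*G*(12*N-8) :=
    mul_nonneg (mul_nonneg (sq_nonneg η) hGnn) (by linarith)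
  have h4 : (0:ℝ) ≤ N*S := mul_nonneg hN0.le hSnn
  nlinarith [t1, t2, h3, h4]
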